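/- Let φ be a bimodal μ-formula, (M_0, w_0) an arbitrary pointed bimodal Kripke model, and define (M_{k+1}, w_{k+1}) = f_{φ∧φ}(M_k, w_k) for all k ∈ ℕ. Then for all m > n, the pointed models (M_n, w_n) and (M_m, w_m) are n-isomorphic. -/
import Mathlib


/- ### μ-calculus: syntax and Kripke semantics -/

/-- μ-formulas over a modal signature `Λ`, with propositional symbols and
variables indexed by `ℕ`; negation applies to propositional symbols only. -/
inductive MuForm (Λ : Type) : Type where
  | prop : ℕ → MuForm Λ
  | nprop : ℕ → MuForm Λ
  | var : ℕ → MuForm Λ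
  | and : MuForm Λ → MuForm Λ → MuForm Λ
  | or : MuForm Λ → MuForm Λ → MuForm Λ
  | box : Λ → MuForm Λ → MuForm Λ
  | dia : Λ → MuForm Λ → MuForm Λ
  | mu : ℕ → MuForm Λ → MuForm Λ
  | nu : ℕ → MuForm Λ → MuForm Λ

/-- A Kripke model over signature `Λ` with set of worlds `W`. -/
structure KModel (Λ W : Type) where
  R : Λ → W → W → Prop
  V : ℕ → Set W

namespace MuForm

variable {Λ W : Type}

/-- The valuation `‖φ‖^M` of a μ-formula, where `env` interprets the variables;
least and greatest fixed points are taken in the complete lattice `Set W`. -/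
def sem (M : KModel Λ W) (env : ℕ → Set W) : MuForm Λ → Set W
  | prop p => M.V p
  | nprop p => (M.V p)ᶜ
  | var x => env x
  | and a b => sem M env a ∩ sem M env b
  | or a b => sem M env a ∪ sem M env b
  | box i a => {w | ∀ v, M.R i w v → v ∈ sem M env a}
  | dia i a => {w | ∃ v, M.R i w v ∧ v ∈ sem M env a}
  | mu x a => sInf {A : Set W | sem M (Function.update env x A) a ⊆ A}
  | nu x a => sSup {A : Set W | A ⊆ sem M (Function.update env x A) a}

/-- Free variables of a μ-formula. -/
def freeVars : MuForm Λ → Set ℕ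
  | prop _ => ∅
  | nprop _ => ∅
  | var x => {x}
  | and a b => freeVars a ∪ freeVars b
  | or a b => freeVars a ∪ freeVars b
  | box _ a => freeVars a
  | dia _ a => freeVars a
  | mu x a => freeVars a \ {x}
  | nu x a => freeVars a \ {x}

/-- A μ-formula contains no fixed-point operators. -/
def noFix : MuForm Λ → Prop
  | prop _ => True
  | nprop _ => True
  | var _ => True
  | and a b => noFix a ∧ noFix b
  | or a b => noFix a ∧ noFix b
  | box _ a => noFix a
  | dia _ a => noFix a
  | mu _ _ => False
  | nu _ _ => False

/-- The list of subformulas of a μ-formula. -/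
def subfs : MuForm Λ → List (MuForm Λ)
  | prop p => [prop p]
  | nprop p => [nprop p]
  | var x => [var x]
  | and a b => (and a b) :: (subfs a ++ subfs b)
  | or a b => (or a b) :: (subfs a ++ subfs b)
  | box i a => (box i a) :: subfs a
  | dia i a => (dia i a) :: subfs a
  | mu x a => (mu x a) :: subfs a
  | nu x a => (nu x a) :: subfs a

/-- Substitution of `ψ` for the free occurrences of the variable `X`. -/
def subst (X : ℕ) (ψ : MuForm Λ) : MuForm Λ → MuForm Λ
  | prop p => prop p
  | nprop p => nprop p
  | var y => if y = X then ψ else var y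
  | and a b => and (subst X ψ a) (subst X ψ b)
  | or a b => or (subst X ψ a) (subst X ψ b)
  | box i a => box i (subst X ψ a)
  | dia i a => dia i (subst X ψ a)
  | mu y a => if y = X then mu y a else mu y (subst X ψ a)
  | nu y a => if y = X then nu y a else nu y (subst X ψ a)

/-- The substitution of `ψ` for `X` is capture-free: no free variable of `ψ`
becomes bound when substituting `ψ` for the free occurrences of `X`. -/
def CaptureFree (X : ℕ) (ψ : MuForm Λ) : MuForm Λ → Prop
  | prop _ => True
  | nprop _ => True
  | var _ => True
  | and a b => CaptureFree X ψ a ∧ CaptureFree X ψ b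
  | or a b => CaptureFree X ψ a ∧ CaptureFree X ψ b
  | box _ a => CaptureFree X ψ a
  | dia _ a => CaptureFree X ψ a
  | mu y a => y = X ∨ ((X ∈ freeVars a → y ∉ freeVars ψ) ∧ CaptureFree X ψ a)
  | nu y a => y = X ∨ ((X ∈ freeVars a → y ∉ freeVars ψ) ∧ CaptureFree X ψ a)

/-- Number of occurrences of the variable `X`. -/
def varCnt (X : ℕ) : MuForm Λ → ℕ
  | prop _ => 0
  | nprop _ => 0
  | var y => if y = X then 1 else 0
  | and a b => varCnt X a + varCnt X b
  | or a b => varCnt X a + varCnt X b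
  | box _ a => varCnt X a
  | dia _ a => varCnt X a
  | mu _ a => varCnt X a
  | nu _ a => varCnt X a

/-- Number of fixed-point binders binding the variable `X`. -/
def bndCnt (X : ℕ) : MuForm Λ → ℕ
  | prop _ => 0
  | nprop _ => 0
  | var _ => 0
  | and a b => bndCnt X a + bndCnt X b
  | or a b => bndCnt X a + bndCnt X b
  | box _ a => bndCnt X a
  | dia _ a => bndCnt X a
  | mu y a => (if y = X then 1 else 0) + bndCnt X a
  | nu y a => (if y = X then 1 else 0) + bndCnt X a

end MuForm

/-- Each variable has at most one occurrence, is bound by at most one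
fixed-point operator, and no variable occurs free. -/
def WellNamed {Λ : Type} (φ : MuForm Λ) : Prop :=
  (∀ X : ℕ, MuForm.varCnt X φ ≤ 1 ∧ MuForm.bndCnt X φ ≤ 1) ∧ MuForm.freeVars φ = ∅

/- ### The alternation hierarchy Σ^μ_n / Π^μ_n -/

mutual
  /-- The class `Σ^μ_n` of the alternation hierarchy. -/
  inductive SigmaMu {Λ : Type} : ℕ → MuForm Λ → Prop where
    | base {φ : MuForm Λ} : φ.noFix → SigmaMu 0 φ
    | upS {n : ℕ} {φ : MuForm Λ} : SigmaMu n φ → SigmaMu (n + 1) φ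
    | upP {n : ℕ} {φ : MuForm Λ} : PiMu n φ → SigmaMu (n + 1) φ
    | andI {n : ℕ} {a b : MuForm Λ} :
        SigmaMu (n + 1) a → SigmaMu (n + 1) b → SigmaMu (n + 1) (MuForm.and a b)
    | orI {n : ℕ} {a b : MuForm Λ} :
        SigmaMu (n + 1) a → SigmaMu (n + 1) b → SigmaMu (n + 1) (MuForm.or a b)
    | boxI {n : ℕ} {i : Λ} {a : MuForm Λ} :
        SigmaMu (n + 1) a → SigmaMu (n + 1) (MuForm.box i a)
    | diaI {n : ℕ} {i : Λ} {a : MuForm Λ} :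
        SigmaMu (n + 1) a → SigmaMu (n + 1) (MuForm.dia i a)
    | muI {n : ℕ} {X : ℕ} {a : MuForm Λ} :
        SigmaMu (n + 1) a → SigmaMu (n + 1) (MuForm.mu X a)
    | substI {n : ℕ} {X : ℕ} {a ψ : MuForm Λ} :
        SigmaMu (n + 1) a → SigmaMu (n + 1) ψ → MuForm.CaptureFree X ψ a →
        SigmaMu (n + 1) (MuForm.subst X ψ a)

  /-- The class `Π^μ_n` of the alternation hierarchy. -/
  inductive PiMu {Λ : Type} : ℕ → MuForm Λ → Prop where
    | base {φ : MuForm Λ} : φ.noFix → PiMu 0 φ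
    | upS {n : ℕ} {φ : MuForm Λ} : SigmaMu n φ → PiMu (n + 1) φ
    | upP {n : ℕ} {φ : MuForm Λ} : PiMu n φ → PiMu (n + 1) φ
    | andI {n : ℕ} {a b : MuForm Λ} :
        PiMu (n + 1) a → PiMu (n + 1) b → PiMu (n + 1) (MuForm.and a b)
    | orI {n : ℕ} {a b : MuForm Λ} :
        PiMu (n + 1) a → PiMu (n + 1) b → PiMu (n + 1) (MuForm.or a b)
    | boxI {n : ℕ} {i : Λ} {a : MuForm Λ} :
        PiMu (n + 1) a → PiMu (n + 1) (MuForm.box i a)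
    | diaI {n : ℕ} {i : Λ} {a : MuForm Λ} :
        PiMu (n + 1) a → PiMu (n + 1) (MuForm.dia i a)
    | nuI {n : ℕ} {X : ℕ} {a : MuForm Λ} :
        PiMu (n + 1) a → PiMu (n + 1) (MuForm.nu X a)
    | substI {n : ℕ} {X : ℕ} {a ψ : MuForm Λ} :
        PiMu (n + 1) a → PiMu (n + 1) ψ → MuForm.CaptureFree X ψ a →
        PiMu (n + 1) (MuForm.subst X ψ a)
end

/- ### Kripke frames, closure conditions, fusions, equivalence -/

/-- A Kripke frame over the signature `Λ`. -/
structure Frame (Λ : Type) : Type 1 where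
  World : Type
  R : Λ → World → World → Prop

/-- Frame isomorphism. -/
def FrameIso {Λ : Type} (F G : Frame Λ) : Prop :=
  ∃ e : F.World ≃ G.World, ∀ (i : Λ) (w v : F.World), F.R i w v ↔ G.R i (e w) (e v)

/-- A class of frames is closed under isomorphic copies. -/
def ClosedUnderIso {Λ : Type} (C : Set (Frame Λ)) : Prop :=
  ∀ F ∈ C, ∀ G : Frame Λ, FrameIso F G → G ∈ C

/-- Disjoint union of a family of frames. -/
def Frame.disjUnion {Λ ι : Type} (f : ι → Frame Λ) : Frame Λ where
  World := Σ i : ι, (f i).World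
  R m x y :=
    ∃ h : x.1 = y.1, (f y.1).R m (cast (congrArg (fun i => (f i).World) h) x.2) y.2

/-- A class of frames is closed under disjoint unions. -/
def ClosedUnderDU {Λ : Type} (C : Set (Frame Λ)) : Prop :=
  ∀ (ι : Type) (f : ι → Frame Λ), (∀ i, f i ∈ C) → Frame.disjUnion f ∈ C

/-- `∘→∘` is a subframe of the class `C` of unimodal frames. -/
def HasEdge (C : Set (Frame Unit)) : Prop :=
  ∃ F ∈ C, ∃ w0 w1 : F.World, w0 ≠ w1 ∧ F.R () w0 w1

/-- `∘←∘→∘` is a subframe of the class `C` of unimodal frames. -/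
def HasFork (C : Set (Frame Unit)) : Prop :=
  ∃ F ∈ C, ∃ w0 w1 w2 : F.World,
    w0 ≠ w1 ∧ w0 ≠ w2 ∧ w1 ≠ w2 ∧ F.R () w0 w1 ∧ F.R () w0 w2

/-- `∘→∘→∘` is a subframe of the class `C` of unimodal frames. -/
def HasChain2 (C : Set (Frame Unit)) : Prop :=
  ∃ F ∈ C, ∃ w0 w1 w2 : F.World,
    w0 ≠ w1 ∧ w0 ≠ w2 ∧ w1 ≠ w2 ∧ F.R () w0 w1 ∧ F.R () w1 w2

/-- The unimodal reduct of a bimodal frame. -/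
def Frame.reduct2 (F : Frame (Fin 2)) (i : Fin 2) : Frame Unit :=
  ⟨F.World, fun _ => F.R i⟩

/-- Fusion of two classes of unimodal frames (signatures `{0}` and `{1}`). -/
def fusion2 (C0 C1 : Set (Frame Unit)) : Set (Frame (Fin 2)) :=
  {F | F.reduct2 0 ∈ C0 ∧ F.reduct2 1 ∈ C1}

/-- The unimodal reduct of a trimodal frame. -/
def Frame.reduct3 (F : Frame (Fin 3)) (i : Fin 3) : Frame Unit :=
  ⟨F.World, fun _ => F.R i⟩

/-- Fusion of three classes of unimodal frames. -/
def fusion3 (C0 C1 C2 : Set (Frame Unit)) : Set (Frame (Fin 3)) :=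
  {F | F.reduct3 0 ∈ C0 ∧ F.reduct3 1 ∈ C1 ∧ F.reduct3 2 ∈ C2}

/-- Two μ-formulas are equivalent over a class of frames: they have the same
valuation in every model based on a frame of the class. -/
def EquivOver {Λ : Type} (C : Set (Frame Λ)) (φ ψ : MuForm Λ) : Prop :=
  ∀ F ∈ C, ∀ (V : ℕ → Set F.World) (env : ℕ → Set F.World),
    MuForm.sem ⟨F.R, V⟩ env φ = MuForm.sem ⟨F.R, V⟩ env ψ

/- ### Games, strategies, evaluation games, parity games -/

/-- A two-player game on a graph: positions owned by `ownV` belong to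
Verifier/∃, the others to Refuter/∀; `winV` decides infinite plays.
A player who cannot move loses. -/
structure Game (Pos : Type) where
  init : Pos
  ownV : Pos → Prop
  move : Pos → Pos → Prop
  winV : (ℕ → Pos) → Prop

/-- The history (current position first) of an infinite play after `n` steps. -/
def histN {Pos : Type} (p : ℕ → Pos) (n : ℕ) : List Pos :=
  ((List.range (n + 1)).map p).reverse

/-- Finite histories (current position first) of plays in which the player
owning the `own`-positions follows the strategy `σ`. -/
inductive Game.Hist {Pos : Type} (G : Game Pos) (own : Pos → Prop)
    (σ : List Pos → Pos) : List Pos → Prop where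
  | init : Game.Hist G own σ [G.init]
  | smove {l : List Pos} {x : Pos} : Game.Hist G own σ (x :: l) → own x →
      G.move x (σ (x :: l)) → Game.Hist G own σ (σ (x :: l) :: x :: l)
  | omove {l : List Pos} {x y : Pos} : Game.Hist G own σ (x :: l) → ¬ own x →
      G.move x y → Game.Hist G own σ (y :: x :: l)

/-- The player owning the `own`-positions has a winning strategy:
a strategy which always provides a legal move at reachable own positions
(so the player is never stuck) and such that every infinite play following it
satisfies the winning condition `winO`; finite plays in which the opponent is
stuck are automatically won. -/
def Game.WinsFor {Pos : Type} (G : Game Pos) (own : Pos → Prop)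
    (winO : (ℕ → Pos) → Prop) : Prop :=
  ∃ σ : List Pos → Pos,
    (∀ (l : List Pos) (x : Pos), G.Hist own σ (x :: l) → own x →
      G.move x (σ (x :: l))) ∧
    (∀ p : ℕ → Pos, p 0 = G.init → (∀ n, G.move (p n) (p (n + 1))) →
      (∀ n, own (p n) → p (n + 1) = σ (histN p n)) → winO p)

/-- Verifier has a winning strategy. -/
def Game.VWins {Pos : Type} (G : Game Pos) : Prop := G.WinsFor G.ownV G.winV

/-- Refuter has a winning strategy. -/
def Game.RWins {Pos : Type} (G : Game Pos) : Prop :=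
  G.WinsFor (fun x => ¬ G.ownV x) (fun p => ¬ G.winV p)

/-- Ownership of positions in the evaluation game `𝒢(M, w ⊨ φ0)`:
Verifier owns disjunctions, diamonds, μ-formulas, μ-bound variables and
false literals. -/
def evalOwnV {Λ W : Type} (M : KModel Λ W) (φ0 : MuForm Λ) :
    MuForm Λ × W → Prop := fun q =>
  match q with
  | (.or _ _, _) => True
  | (.dia _ _, _) => True
  | (.mu _ _, _) => True
  | (.var X, _) => ∃ a : MuForm Λ, (MuForm.mu X a) ∈ φ0.subfs
  | (.prop p, w) => w ∉ M.V p
  | (.nprop p, w) => w ∈ M.V p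
  | _ => False

/-- Admissible moves in the evaluation game `𝒢(M, w ⊨ φ0)`. -/
def evalMove {Λ W : Type} (M : KModel Λ W) (φ0 : MuForm Λ) :
    MuForm Λ × W → MuForm Λ × W → Prop := fun q r =>
  match q with
  | (.and a b, w) => r = (a, w) ∨ r = (b, w)
  | (.or a b, w) => r = (a, w) ∨ r = (b, w)
  | (.box i a, w) => ∃ v, M.R i w v ∧ r = (a, v)
  | (.dia i a, w) => ∃ v, M.R i w v ∧ r = (a, v)
  | (.mu _ a, w) => r = (a, w)
  | (.nu _ a, w) => r = (a, w)
  | (.var X, w) =>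
      ∃ a : MuForm Λ,
        ((MuForm.mu X a) ∈ φ0.subfs ∧ r = (MuForm.mu X a, w)) ∨
        ((MuForm.nu X a) ∈ φ0.subfs ∧ r = (MuForm.nu X a, w))
  | (.prop _, _) => False
  | (.nprop _, _) => False

/-- The formula `ψ` labels infinitely many positions of the infinite run `p`. -/
def InfOccF {Λ W : Type} (p : ℕ → MuForm Λ × W) (ψ : MuForm Λ) : Prop :=
  ∀ n, ∃ m, n ≤ m ∧ (p m).1 = ψ

/-- Verifier wins an infinite run iff the outermost fixed-point subformula
occurring infinitely often is a ν-formula. -/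
def evalWinV {Λ W : Type} (p : ℕ → MuForm Λ × W) : Prop :=
  ∃ (X : ℕ) (a : MuForm Λ), InfOccF p (MuForm.nu X a) ∧
    ∀ χ : MuForm Λ, InfOccF p χ → χ ∈ (MuForm.nu X a).subfs

/-- The evaluation game `𝒢(M, w ⊨ φ)`. -/
def evalGame {Λ W : Type} (M : KModel Λ W) (w : W) (φ : MuForm Λ) :
    Game (MuForm Λ × W) where
  init := (φ, w)
  ownV := evalOwnV M φ
  move := evalMove M φ
  winV := evalWinV

/-- A parity game. -/
structure PGame : Type 1 where
  Pos : Type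
  ownE : Pos → Prop
  init : Pos
  E : Pos → Pos → Prop
  Ω : Pos → ℕ

/-- The parity `k` occurs infinitely often in the infinite play `p`. -/
def InfOccPar (P : PGame) (p : ℕ → P.Pos) (k : ℕ) : Prop :=
  ∀ n, ∃ m, n ≤ m ∧ P.Ω (p m) = k

/-- A parity game as a game: ∃ wins an infinite play iff the greatest parity
occurring infinitely often is even. -/
def PGame.toGame (P : PGame) : Game P.Pos where
  init := P.init
  ownV := P.ownE
  move := P.E
  winV := fun p => ∃ k, Even k ∧ InfOccPar P p k ∧ ∀ j, InfOccPar P p j → j ≤ k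

/-- Player ∃ wins the parity game. -/
def PGame.ExWins (P : PGame) : Prop := P.toGame.VWins

/-- Player ∀ wins the parity game. -/
def PGame.AWins (P : PGame) : Prop := P.toGame.RWins

/-- The parity of a fixed-point formula: `2(i+ε) − 1` for a μ-formula in
`Σ^μ_{2i+ε} \ Π^μ_{2i+ε}`, `2i` for a ν-formula in `Π^μ_{2i+ε} \ Σ^μ_{2i+ε}`,
and `0` for non fixed-point formulas. -/
noncomputable def fpParity {Λ : Type} : MuForm Λ → ℕ := fun φ =>
  match φ with
  | .mu _ _ =>
      (fun ℓ => if Even ℓ then ℓ - 1 else ℓ) (sInf {k | SigmaMu k φ ∧ ¬ PiMu k φ})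
  | .nu _ _ =>
      (fun ℓ => if Even ℓ then ℓ else ℓ - 1) (sInf {k | PiMu k φ ∧ ¬ SigmaMu k φ})
  | _ => 0

/-- The evaluation game `𝒢(M, w ⊨ φ)` presented as the parity game
`𝒢^P(M, w ⊨ φ)`. -/
noncomputable def evalPGame {Λ W : Type} (M : KModel Λ W) (w : W)
    (φ : MuForm Λ) : PGame where
  Pos := MuForm Λ × W
  ownE := evalOwnV M φ
  init := (φ, w)
  E := evalMove M φ
  Ω := fun q => fpParity q.1

/- ### Tree unfolding of a parity game -/

/-- Finite `E`-paths of a parity game starting at the initial position,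
presented as (last vertex, reversed list of earlier vertices). -/
inductive IsUPath (P : PGame) : P.Pos × List P.Pos → Prop where
  | init : IsUPath P (P.init, [])
  | cons {u : P.Pos} {t : List P.Pos} {v : P.Pos} :
      IsUPath P (u, t) → P.E u v → IsUPath P (v, u :: t)

/-- The tree unfolding of a parity game: positions are the finite `E`-paths
starting at the initial position, with ownership and parity inherited from
the last vertex. -/
def PGame.unfold (P : PGame) : PGame where
  Pos := {q : P.Pos × List P.Pos // IsUPath P q}
  ownE := fun q => P.ownE q.val.1
  init := ⟨(P.init, []), IsUPath.init⟩
  E := fun q r => r.val.2 = q.val.1 :: q.val.2 ∧ P.E q.val.1 r.val.1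
  Ω := fun q => P.Ω q.val.1

/- ### The Kripke encoding of parity games and the formulas W_n -/

/- Propositional indices used for the encoding:
`bd = 0`, `pos = 1`, `pre₀ = 2`, `nxt₀ = 3`, `pre₁ = 4`, `nxt₁ = 5`,
`P_∃ = 6`, `P_∀ = 7`, `P_j = 8 + j`. -/

/-- Worlds of the Kripke model encoding a parity game: a world `pos v` for
each position `v`, and intermediate choice/confirmation worlds `mid u u'`
for the edges. -/
inductive EncW (Pos : Type) : Type where
  | pos : Pos → EncW Pos
  | mid : Pos → Pos → EncW Pos

/-- Choice steps (`R₀`) of the encoding. -/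
def encR0 (P : PGame) : EncW P.Pos → EncW P.Pos → Prop
  | EncW.pos v, EncW.mid u u' => v = u ∧ P.E u u'
  | _, _ => False

/-- Confirmation steps (`R₁`) of the encoding. -/
def encR1 (P : PGame) : EncW P.Pos → EncW P.Pos → Prop
  | EncW.mid u u', EncW.pos v => v = u' ∧ P.E u u'
  | _, _ => False

/-- Valuation of the encoding. -/
def encV (P : PGame) : ℕ → Set (EncW P.Pos) := fun n =>
  if n = 0 then Set.univ                                         -- bd
  else if n = 1 then {x | ∃ v, x = EncW.pos v}                   -- pos
  else if n = 2 then {x | ∃ v, x = EncW.pos v}                   -- pre₀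
  else if n = 3 then {x | ∃ u u', x = EncW.mid u u'}             -- nxt₀
  else if n = 4 then {x | ∃ u u', x = EncW.mid u u'}             -- pre₁
  else if n = 5 then {x | ∃ v, x = EncW.pos v}                   -- nxt₁
  else if n = 6 then {x | ∃ v, x = EncW.pos v ∧ P.ownE v}        -- P_∃
  else if n = 7 then {x | ∃ v, x = EncW.pos v ∧ ¬ P.ownE v}      -- P_∀
  else {x | ∃ v, x = EncW.pos v ∧ P.Ω v = n - 8}                 -- P_{n-8}

/-- The bimodal Kripke model `P^K` encoding the parity game `P`. -/
def encModel (P : PGame) : KModel (Fin 2) (EncW P.Pos) where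
  R := fun i => if i = 0 then encR0 P else encR1 P
  V := encV P

/-- `♦φ := νY. pre₀ ∧ bd ∧ ◇₀(nxt₀ ∧ pre₁ ∧ bd ∧ ◇₁(nxt₁ ∧ bd ∧
((Y ∧ ¬pos) ∨ (φ ∧ pos))))`. -/
def DiamW (Y : ℕ) (φ : MuForm (Fin 2)) : MuForm (Fin 2) :=
  .nu Y (.and (.prop 2) (.and (.prop 0)
    (.dia 0 (.and (.prop 3) (.and (.prop 4) (.and (.prop 0)
      (.dia 1 (.and (.prop 5) (.and (.prop 0)
        (.or (.and (.var Y) (.nprop 1)) (.and φ (.prop 1))))))))))))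

/-- `■φ := νY. (pre₀ ∧ bd → □₀(nxt₀ ∧ pre₁ ∧ bd → □₁(nxt₁ ∧ bd →
((Y ∧ ¬pos) ∧ (φ ∧ pos)))))`, implications written disjunctively. -/
def BoxW (Y : ℕ) (φ : MuForm (Fin 2)) : MuForm (Fin 2) :=
  .nu Y (.or (.or (.nprop 2) (.nprop 0))
    (.box 0 (.or (.or (.nprop 3) (.or (.nprop 4) (.nprop 0)))
      (.box 1 (.or (.or (.nprop 5) (.nprop 0))
        (.and (.and (.var Y) (.nprop 1)) (.and φ (.prop 1))))))))

/-- The `j`-th disjunct `(P_j ∧ P_∃ ∧ ♦X_j) ∨ (P_j ∧ P_∀ ∧ ■X_j)`. -/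
def WDisj (Y j : ℕ) : MuForm (Fin 2) :=
  .or (.and (.prop (8 + j)) (.and (.prop 6) (DiamW Y (.var j))))
      (.and (.prop (8 + j)) (.and (.prop 7) (BoxW Y (.var j))))

/-- The disjunction `⋁_{0 ≤ j ≤ n} [(P_j ∧ P_∃ ∧ ♦X_j) ∨ (P_j ∧ P_∀ ∧ ■X_j)]`. -/
def WBody (Y : ℕ) : ℕ → MuForm (Fin 2)
  | 0 => WDisj Y 0
  | j + 1 => .or (WBody Y (j)) (WDisj Y (j + 1))

/-- The alternating block of binders `ηX_n … νX_2 μX_1 νX_0`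
(`νX_j` for even `j`, `μX_j` for odd `j`). -/
def WBind : ℕ → MuForm (Fin 2) → MuForm (Fin 2)
  | 0, φ => .nu 0 φ
  | j + 1, φ =>
      if Even (j + 1) then .nu (j + 1) (WBind j φ) else .mu (j + 1) (WBind j φ)

/-- The winning region formula
`W_n := ηX_n … νX_2 μX_1 νX_0. ⋁_{0≤j≤n} [(P_j ∧ P_∃ ∧ ♦X_j) ∨ (P_j ∧ P_∀ ∧ ■X_j)]`,
where the fresh variable `Y` of `♦`/`■` is `n + 1`. -/
def Wfml (n : ℕ) : MuForm (Fin 2) := WBind n (WBody (n + 1) n)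

/- ### Pointed bimodal models, restriction, isomorphisms, the map f_φ -/

/-- A pointed bimodal Kripke model. -/
structure PModel : Type 1 where
  World : Type
  R0 : World → World → Prop
  R1 : World → World → Prop
  V : ℕ → Set World
  pt : World

/-- The underlying bimodal Kripke model. -/
def PModel.toK (M : PModel) : KModel (Fin 2) M.World :=
  ⟨fun i => if i = 0 then M.R0 else M.R1, M.V⟩

/-- The edges of the graph of a pointed bimodal model. -/
def PModel.edge (M : PModel) (x y : M.World) : Prop := M.R0 x y ∨ M.R1 x y

/-- The graph of the model has no loops. -/
def PModel.Acyclic (M : PModel) : Prop :=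
  ∀ x : M.World, ¬ Relation.TransGen M.edge x x

/-- Reachability in at most `k` steps. -/
def stepsLe (M : PModel) : ℕ → M.World → M.World → Prop
  | 0 => fun x y => x = y
  | k + 1 => fun x y => stepsLe M k x y ∨ ∃ u, stepsLe M k x u ∧ M.edge u y

/-- The worlds at distance less than `n` from the distinguished point. -/
def PModel.ball (M : PModel) (n : ℕ) : Set M.World :=
  {v | ∃ k, k + 1 ≤ n ∧ stepsLe M k M.pt v}

/-- `e` is an isomorphism between the restrictions `(M↾n, w)` and `(M'↾n, w')`,
i.e. an `n`-isomorphism. -/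
structure IsNIso (M M' : PModel) (n : ℕ)
    (e : {x // x ∈ M.ball n} ≃ {x // x ∈ M'.ball n}) : Prop where
  pt : ∀ hx : M.pt ∈ M.ball n, (e ⟨M.pt, hx⟩).val = M'.pt
  r0 : ∀ x y : {x // x ∈ M.ball n}, M.R0 x.val y.val ↔ M'.R0 (e x).val (e y).val
  r1 : ∀ x y : {x // x ∈ M.ball n}, M.R1 x.val y.val ↔ M'.R1 (e x).val (e y).val
  vals : ∀ (p : ℕ) (x : {x // x ∈ M.ball n}), x.val ∈ M.V p ↔ (e x).val ∈ M'.V p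

/-- The pointed models are `n`-isomorphic. -/
def NIsomorphic (M M' : PModel) (n : ℕ) : Prop := ∃ e, IsNIso M M' n e

/-- `e` is an isomorphism of pointed bimodal models. -/
structure IsIsoP (M M' : PModel) (e : M.World ≃ M'.World) : Prop where
  pt : e M.pt = M'.pt
  r0 : ∀ x y : M.World, M.R0 x y ↔ M'.R0 (e x) (e y)
  r1 : ∀ x y : M.World, M.R1 x y ↔ M'.R1 (e x) (e y)
  vals : ∀ (p : ℕ) (x : M.World), x ∈ M.V p ↔ e x ∈ M'.V p

/-- The pointed models are isomorphic. -/
def IsomorphicP (M M' : PModel) : Prop := ∃ e, IsIsoP M M' e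

/-- The map `f_φ` sending a pointed bimodal model `(M, w)` to the pointed
Kripke model `(𝒢^K(M, w ⊨ φ), ⟨φ, w⟩)` representing its evaluation game,
where `𝒢^K(M, w ⊨ φ) = (𝒢^P(M, w ⊨ φ))^K`. -/
noncomputable def fGame (φ : MuForm (Fin 2)) (M : PModel) : PModel where
  World := EncW (MuForm (Fin 2) × M.World)
  R0 := encR0 (evalPGame M.toK M.pt φ)
  R1 := encR1 (evalPGame M.toK M.pt φ)
  V := encV (evalPGame M.toK M.pt φ)
  pt := EncW.pos (φ, M.pt)

/- ### Modal logics, fusions of logics, GLP -/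

/-- Modal formulas (no fixed points) over a signature `I`, with full
implication and falsum. -/
inductive MForm (I : Type) : Type where
  | prop : ℕ → MForm I
  | fls : MForm I
  | imp : MForm I → MForm I → MForm I
  | box : I → MForm I → MForm I

namespace MForm

variable {I : Type}

def neg (a : MForm I) : MForm I := a.imp .fls

def conj (a b : MForm I) : MForm I := (a.imp b.neg).neg

def diam (i : I) (a : MForm I) : MForm I := (MForm.box i a.neg).neg

def iff (a b : MForm I) : MForm I := conj (a.imp b) (b.imp a)

/-- Kripke semantics for modal formulas. -/
def semM {W : Type} (R : I → W → W → Prop) (V : ℕ → Set W) : MForm I → Set W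
  | prop p => V p
  | fls => ∅
  | imp a b => {w | w ∈ semM R V a → w ∈ semM R V b}
  | box i a => {w | ∀ v, R i w v → v ∈ semM R V a}

/-- Uniform substitution of formulas for propositional symbols. -/
def substP (σ : ℕ → MForm I) : MForm I → MForm I
  | prop p => σ p
  | fls => fls
  | imp a b => imp (substP σ a) (substP σ b)
  | box i a => box i (substP σ a)

/-- The formula only uses modalities from `S`. -/
def UsesOnly (S : Set I) : MForm I → Prop
  | prop _ => True
  | fls => True
  | imp a b => UsesOnly S a ∧ UsesOnly S b
  | box i a => i ∈ S ∧ UsesOnly S a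

/-- The propositional symbol `x` occurs in the formula. -/
def PropOccurs (x : ℕ) : MForm I → Prop
  | prop p => p = x
  | fls => False
  | imp a b => PropOccurs x a ∨ PropOccurs x b
  | box _ a => PropOccurs x a

/-- Every occurrence of the propositional symbol `x` is within the scope of
some modality. -/
def Guarded (x : ℕ) : MForm I → Prop
  | prop p => p ≠ x
  | fls => True
  | imp a b => Guarded x a ∧ Guarded x b
  | box _ _ => True

end MForm

/-- Propositional tautologies: formulas true under every boolean valuation
treating propositional symbols and boxed formulas as atoms. -/
def IsTaut {I : Type} (φ : MForm I) : Prop :=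
  ∀ val : MForm I → Prop, ¬ val .fls →
    (∀ a b : MForm I, val (a.imp b) ↔ (val a → val b)) → val φ

/-- A modal formula is valid on a frame: it holds at every world under
every valuation. -/
def ValidOn {I : Type} (F : Frame I) (φ : MForm I) : Prop :=
  ∀ (V : ℕ → Set F.World) (w : F.World), w ∈ MForm.semM F.R V φ

/-- `L` is a normal modal logic in the signature `S`. -/
structure IsNormalIn {I : Type} (S : Set I) (L : Set (MForm I)) : Prop where
  inSig : ∀ φ ∈ L, MForm.UsesOnly S φ
  taut : ∀ φ : MForm I, MForm.UsesOnly S φ → IsTaut φ → φ ∈ L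
  axK : ∀ i ∈ S, ∀ a b : MForm I, MForm.UsesOnly S a → MForm.UsesOnly S b →
    ((MForm.box i (a.imp b)).imp ((MForm.box i a).imp (MForm.box i b))) ∈ L
  mp : ∀ a b : MForm I, a ∈ L → (a.imp b) ∈ L → b ∈ L
  nec : ∀ i ∈ S, ∀ a : MForm I, a ∈ L → MForm.box i a ∈ L
  subst : ∀ σ : ℕ → MForm I, (∀ p, MForm.UsesOnly S (σ p)) →
    ∀ a ∈ L, a.substP σ ∈ L

/-- The fusion of a family of modal logics: the smallest normal modal logic
in the combined signature containing each of them. -/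
def FusionLogic {I J : Type} (Ls : J → Set (MForm I)) : Set (MForm I) :=
  ⋂₀ {L : Set (MForm I) | IsNormalIn Set.univ L ∧ ∀ j, Ls j ⊆ L}

/-- Extension of a frame for the `j`-th component signature to the full
signature (the other relations are empty; validity of formulas in the
component signature is unaffected). -/
def extendFrame {I J : Type} (c : I → J) (j : J)
    (F : Frame {i : I // c i = j}) : Frame I :=
  ⟨F.World, fun i w v => ∃ h : c i = j, F.R ⟨i, h⟩ w v⟩

/-- The reduct of a frame for the full signature to the `j`-th component. -/
def Frame.reductTo {I J : Type} (c : I → J) (j : J) (F : Frame I) :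
    Frame {i : I // c i = j} :=
  ⟨F.World, fun i => F.R i.val⟩

/-- `L` is characterized by the class `Fs` of frames in the `j`-th component
signature: `L` consists exactly of the formulas of that signature valid on
every frame of `Fs`. -/
def CharacterizedBy {I J : Type} (c : I → J) (j : J) (L : Set (MForm I))
    (Fs : Set (Frame {i : I // c i = j})) : Prop :=
  L = {φ | MForm.UsesOnly {i | c i = j} φ ∧
        ∀ F ∈ Fs, ValidOn (extendFrame c j F) φ}

/-- The fusion of classes of frames in pairwise disjoint signatures. -/
def FusionFrames {I J : Type} (c : I → J)
    (Fs : ∀ j : J, Set (Frame {i : I // c i = j})) : Set (Frame I) :=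
  {F | ∀ j, F.reductTo c j ∈ Fs j}

/-- The finite model property for a logic in signature `S`. -/
def HasFMP {I : Type} (S : Set I) (L : Set (MForm I)) : Prop :=
  ∀ φ : MForm I, MForm.UsesOnly S φ → φ ∉ L →
    ∃ (W : Type) (_ : Finite W) (R : I → W → W → Prop) (V : ℕ → Set W),
      (∀ ψ ∈ L, ∀ w : W, w ∈ MForm.semM R V ψ) ∧ ∃ w : W, w ∉ MForm.semM R V φ

/-- The provability logic `GLP` (signature `ℕ`). -/
inductive GLPthm : MForm ℕ → Prop where
  | taut {φ : MForm ℕ} : IsTaut φ → GLPthm φ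
  | axK (n : ℕ) (a b : MForm ℕ) :
      GLPthm ((MForm.box n (a.imp b)).imp ((MForm.box n a).imp (MForm.box n b)))
  | axLob (n : ℕ) (a : MForm ℕ) :
      GLPthm ((MForm.box n ((MForm.box n a).imp a)).imp (MForm.box n a))
  | axMono {m n : ℕ} (h : m ≤ n) (a : MForm ℕ) :
      GLPthm ((MForm.box m a).imp (MForm.box n a))
  | axStab {m n : ℕ} (h : m ≤ n) (a : MForm ℕ) :
      GLPthm ((MForm.box m a).imp (MForm.box n (MForm.box m a)))
  | axStabD {m n : ℕ} (h : m ≤ n) (a : MForm ℕ) :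
      GLPthm ((MForm.diam m a).imp (MForm.box n (MForm.diam m a)))
  | mp {a b : MForm ℕ} : GLPthm (a.imp b) → GLPthm a → GLPthm b
  | nec (n : ℕ) {a : MForm ℕ} : GLPthm a → GLPthm (MForm.box n a)
  | subst (σ : ℕ → MForm ℕ) {a : MForm ℕ} : GLPthm a → GLPthm (a.substP σ)

/- ### Frame classes for the standard modal logics -/

def FK : Set (Frame Unit) := Set.univ
def FK4 : Set (Frame Unit) := {F | Transitive (F.R ())}
def FS4 : Set (Frame Unit) := {F | Reflexive (F.R ()) ∧ Transitive (F.R ())}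
def FKD45 : Set (Frame Unit) :=
  {F | (∀ w, ∃ v, F.R () w v) ∧ Transitive (F.R ()) ∧
    (∀ w v u, F.R () w v → F.R () w u → F.R () v u)}
def FS5 : Set (Frame Unit) := {F | Equivalence (F.R ())}
def FGL : Set (Frame Unit) :=
  {F | Transitive (F.R ()) ∧ ¬ ∃ f : ℕ → F.World, ∀ k, F.R () (f k) (f (k + 1))}

/- ### Auxiliary development for STATEMENT 10 -/

section AuxNIso

/-- Monotonicity of `stepsLe`. -/
lemma stepsLe_mono (M : PModel) : ∀ {k j : ℕ}, j ≤ k → ∀ {x y : M.World},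
    stepsLe M j x y → stepsLe M k x y := by
  intro k
  induction k with
  | zero => intro j h x y hx; obtain rfl : j = 0 := Nat.le_zero.mp h; exact hx
  | succ k ih =>
    intro j h x y hx
    rcases Nat.eq_or_lt_of_le h with rfl | h'
    · exact hx
    · exact Or.inl (ih (Nat.lt_succ_iff.mp h') hx)

lemma stepsLe_snoc (M : PModel) {k : ℕ} {x y z : M.World}
    (h : stepsLe M k x y) (he : M.edge y z) : stepsLe M (k + 1) x z :=
  Or.inr ⟨y, h, he⟩

lemma toK_R_edge {M : PModel} {i : Fin 2} {x y : M.World}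
    (h : M.toK.R i x y) : M.edge x y := by
  by_cases hi : i = 0
  · subst hi; exact Or.inl (by simpa [PModel.toK] using h)
  · exact Or.inr (by simpa [PModel.toK, hi] using h)

/-- Positions of the evaluation game reachable from the initial position in
at most `j` moves. -/
def GSteps (M : PModel) (ψ : MuForm (Fin 2)) : ℕ → MuForm (Fin 2) × M.World → Prop
  | 0 => fun u => u = (ψ, M.pt)
  | j + 1 => fun u => GSteps M ψ j u ∨
      ∃ t, GSteps M ψ j t ∧ evalMove M.toK ψ t u

lemma evalMove_world {M : PModel} {ψ : MuForm (Fin 2)} :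
    ∀ {u u' : MuForm (Fin 2) × M.World}, evalMove M.toK ψ u u' →
      u'.2 = u.2 ∨ M.edge u.2 u'.2 := by
  rintro ⟨χ, w⟩ u' h
  cases χ with
  | prop p => exact h.elim
  | nprop p => exact h.elim
  | var X =>
    obtain ⟨a, ⟨-, rfl⟩ | ⟨-, rfl⟩⟩ := h
    · exact Or.inl rfl
    · exact Or.inl rfl
  | and a b => rcases h with rfl | rfl <;> exact Or.inl rfl
  | or a b => rcases h with rfl | rfl <;> exact Or.inl rfl
  | box i a => obtain ⟨v, hr, rfl⟩ := h; exact Or.inr (toK_R_edge hr)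
  | dia i a => obtain ⟨v, hr, rfl⟩ := h; exact Or.inr (toK_R_edge hr)
  | mu X a => rw [h]; exact Or.inl rfl
  | nu X a => rw [h]; exact Or.inl rfl

/-- A position reachable in at most `j` moves has its world within `j - 1`
steps of the distinguished point (the first move does not change the world
since the initial formula is a conjunction). -/
lemma GSteps_world {M : PModel} {φ : MuForm (Fin 2)} :
    ∀ {j} {u : MuForm (Fin 2) × M.World}, GSteps M (MuForm.and φ φ) j u →
      stepsLe M (j - 1) M.pt u.2 := by
  intro j
  induction j with
  | zero =>
    intro u hu
    have h0 : u = (MuForm.and φ φ, M.pt) := hu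
    subst h0; rfl
  | succ j ih =>
    rintro u (h | ⟨t, ht, hm⟩)
    · exact stepsLe_mono M (by omega) (ih h)
    · rcases Nat.eq_zero_or_pos j with rfl | hj
      · have h0 : t = (MuForm.and φ φ, M.pt) := ht
        subst h0
        rcases hm with rfl | rfl <;> rfl
      · rcases evalMove_world hm with he | he
        · rw [he]; exact stepsLe_mono M (by omega) (ih ht)
        · exact stepsLe_mono M (by omega) (stepsLe_snoc M (ih ht) he)

lemma pt_mem_ball {M : PModel} {n : ℕ} (hn : 1 ≤ n) : M.pt ∈ M.ball n :=
  ⟨0, hn, rfl⟩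

lemma IsNIso.symm {M M' : PModel} {n : ℕ}
    {I : {x // x ∈ M.ball n} ≃ {x // x ∈ M'.ball n}}
    (hI : IsNIso M M' n I) : IsNIso M' M n I.symm := by
  constructor
  · intro hx
    have hn : 1 ≤ n := by obtain ⟨k, hk, -⟩ := hx; omega
    have hpt : M.pt ∈ M.ball n := pt_mem_ball hn
    have h1 : I ⟨M.pt, hpt⟩ = ⟨M'.pt, hx⟩ := Subtype.ext (hI.pt hpt)
    have h2 : I.symm ⟨M'.pt, hx⟩ = ⟨M.pt, hpt⟩ := by
      rw [← h1, Equiv.symm_apply_apply]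
    rw [h2]
  · intro x y; simpa using (hI.r0 (I.symm x) (I.symm y)).symm
  · intro x y; simpa using (hI.r1 (I.symm x) (I.symm y)).symm
  · intro p x; simpa using (hI.vals p (I.symm x)).symm

open Classical in
/-- Extension of the `n`-isomorphism to a total map on worlds. -/
noncomputable def twMap {M M' : PModel} (n : ℕ)
    (I : {x // x ∈ M.ball n} ≃ {x // x ∈ M'.ball n}) (v : M.World) : M'.World :=
  if h : v ∈ M.ball n then (I ⟨v, h⟩).val else M'.pt

lemma twMap_eq {M M' : PModel} {n : ℕ}
    {I : {x // x ∈ M.ball n} ≃ {x // x ∈ M'.ball n}} {v : M.World}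
    (hv : v ∈ M.ball n) : twMap n I v = (I ⟨v, hv⟩).val := dif_pos hv

lemma twMap_mem {M M' : PModel} {n : ℕ}
    {I : {x // x ∈ M.ball n} ≃ {x // x ∈ M'.ball n}} {v : M.World}
    (hv : v ∈ M.ball n) : twMap n I v ∈ M'.ball n := by
  rw [twMap_eq hv]; exact (I ⟨v, hv⟩).2

lemma twMap_symm {M M' : PModel} {n : ℕ}
    {I : {x // x ∈ M.ball n} ≃ {x // x ∈ M'.ball n}} {v : M.World}
    (hv : v ∈ M.ball n) : twMap n I.symm (twMap n I v) = v := by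
  have h2 : twMap n I v ∈ M'.ball n := twMap_mem hv
  rw [twMap_eq h2]
  have h3 : (⟨twMap n I v, h2⟩ : {x // x ∈ M'.ball n}) = I ⟨v, hv⟩ :=
    Subtype.ext (twMap_eq hv)
  rw [h3, Equiv.symm_apply_apply]

lemma twMap_pt {M M' : PModel} {n : ℕ}
    {I : {x // x ∈ M.ball n} ≃ {x // x ∈ M'.ball n}}
    (hI : IsNIso M M' n I) (hn : 1 ≤ n) : twMap n I M.pt = M'.pt := by
  rw [twMap_eq (pt_mem_ball hn)]; exact hI.pt (pt_mem_ball hn)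

/-- Extension of the `n`-isomorphism to game positions. -/
noncomputable def tpMap {M M' : PModel} (n : ℕ)
    (I : {x // x ∈ M.ball n} ≃ {x // x ∈ M'.ball n})
    (u : MuForm (Fin 2) × M.World) : MuForm (Fin 2) × M'.World :=
  (u.1, twMap n I u.2)

lemma tpMap_symm {M M' : PModel} {n : ℕ}
    {I : {x // x ∈ M.ball n} ≃ {x // x ∈ M'.ball n}}
    {u : MuForm (Fin 2) × M.World} (hu : u.2 ∈ M.ball n) :
    tpMap n I.symm (tpMap n I u) = u := by
  obtain ⟨χ, w⟩ := u
  simp only [tpMap]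
  rw [twMap_symm hu]

lemma tpMap_inj {M M' : PModel} {n : ℕ}
    {I : {x // x ∈ M.ball n} ≃ {x // x ∈ M'.ball n}}
    {u v : MuForm (Fin 2) × M.World}
    (hu : u.2 ∈ M.ball n) (hv : v.2 ∈ M.ball n) :
    tpMap n I u = tpMap n I v ↔ u = v := by
  constructor
  · intro h
    have h2 := congrArg (tpMap n I.symm) h
    rwa [tpMap_symm hu, tpMap_symm hv] at h2
  · rintro rfl; rfl

lemma toK_R_transport {M M' : PModel} {n : ℕ}
    {I : {x // x ∈ M.ball n} ≃ {x // x ∈ M'.ball n}}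
    (hI : IsNIso M M' n I) {i : Fin 2} {x y : M.World}
    (hx : x ∈ M.ball n) (hy : y ∈ M.ball n) :
    M.toK.R i x y ↔ M'.toK.R i (twMap n I x) (twMap n I y) := by
  rw [twMap_eq hx, twMap_eq hy]
  by_cases hi : i = 0
  · subst hi; simpa [PModel.toK] using hI.r0 ⟨x, hx⟩ ⟨y, hy⟩
  · simpa [PModel.toK, hi] using hI.r1 ⟨x, hx⟩ ⟨y, hy⟩

lemma evalMove_transport {M M' : PModel} {n : ℕ}
    {I : {x // x ∈ M.ball n} ≃ {x // x ∈ M'.ball n}}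
    (hI : IsNIso M M' n I) (ψ : MuForm (Fin 2))
    {u u' : MuForm (Fin 2) × M.World}
    (hu : u.2 ∈ M.ball n) (hu' : u'.2 ∈ M.ball n)
    (h : evalMove M.toK ψ u u') :
    evalMove M'.toK ψ (tpMap n I u) (tpMap n I u') := by
  obtain ⟨χ, w⟩ := u
  cases χ with
  | prop p => exact h.elim
  | nprop p => exact h.elim
  | var X =>
    obtain ⟨a, ⟨ha, rfl⟩ | ⟨ha, rfl⟩⟩ := h
    · exact ⟨a, Or.inl ⟨ha, rfl⟩⟩
    · exact ⟨a, Or.inr ⟨ha, rfl⟩⟩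
  | and a b =>
    rcases h with rfl | rfl
    · exact Or.inl rfl
    · exact Or.inr rfl
  | or a b =>
    rcases h with rfl | rfl
    · exact Or.inl rfl
    · exact Or.inr rfl
  | box i a =>
    obtain ⟨v, hr, rfl⟩ := h
    exact ⟨twMap n I v, (toK_R_transport hI hu hu').mp hr, rfl⟩
  | dia i a =>
    obtain ⟨v, hr, rfl⟩ := h
    exact ⟨twMap n I v, (toK_R_transport hI hu hu').mp hr, rfl⟩
  | mu X a => rw [h]; rfl
  | nu X a => rw [h]; rfl

lemma evalMove_iff {M M' : PModel} {n : ℕ}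
    {I : {x // x ∈ M.ball n} ≃ {x // x ∈ M'.ball n}}
    (hI : IsNIso M M' n I) (ψ : MuForm (Fin 2))
    {u u' : MuForm (Fin 2) × M.World}
    (hu : u.2 ∈ M.ball n) (hu' : u'.2 ∈ M.ball n) :
    evalMove M.toK ψ u u' ↔ evalMove M'.toK ψ (tpMap n I u) (tpMap n I u') := by
  constructor
  · exact evalMove_transport hI ψ hu hu'
  · intro h
    have h2 := evalMove_transport hI.symm ψ (twMap_mem hu) (twMap_mem hu') h
    rwa [tpMap_symm hu, tpMap_symm hu'] at h2

lemma evalOwnV_iff {M M' : PModel} {n : ℕ}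
    {I : {x // x ∈ M.ball n} ≃ {x // x ∈ M'.ball n}}
    (hI : IsNIso M M' n I) (ψ : MuForm (Fin 2))
    {u : MuForm (Fin 2) × M.World} (hu : u.2 ∈ M.ball n) :
    evalOwnV M.toK ψ u ↔ evalOwnV M'.toK ψ (tpMap n I u) := by
  obtain ⟨χ, w⟩ := u
  cases χ with
  | prop p =>
    show w ∉ M.V p ↔ twMap n I w ∉ M'.V p
    rw [twMap_eq hu]
    exact not_congr (hI.vals p ⟨w, hu⟩)
  | nprop p =>
    show w ∈ M.V p ↔ twMap n I w ∈ M'.V p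
    rw [twMap_eq hu]
    exact hI.vals p ⟨w, hu⟩
  | var X => exact Iff.rfl
  | and a b => exact Iff.rfl
  | or a b => exact Iff.rfl
  | box i a => exact Iff.rfl
  | dia i a => exact Iff.rfl
  | mu X a => exact Iff.rfl
  | nu X a => exact Iff.rfl

lemma GSteps_transport {M M' : PModel} {n : ℕ}
    {I : {x // x ∈ M.ball n} ≃ {x // x ∈ M'.ball n}}
    (hI : IsNIso M M' n I) (hn : 1 ≤ n) (φ : MuForm (Fin 2)) :
    ∀ j, 2 * j ≤ n → ∀ u, GSteps M (MuForm.and φ φ) j u →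
      GSteps M' (MuForm.and φ φ) j (tpMap n I u) := by
  intro j
  induction j with
  | zero =>
    rintro - u hu
    have h0 : u = (MuForm.and φ φ, M.pt) := hu
    subst h0
    show tpMap n I (MuForm.and φ φ, M.pt) = (MuForm.and φ φ, M'.pt)
    simp only [tpMap]
    rw [twMap_pt hI hn]
  | succ j ih =>
    rintro hj u (h | ⟨t, ht, hm⟩)
    · exact Or.inl (ih (by omega) u h)
    · refine Or.inr ⟨tpMap n I t, ih (by omega) t ht, ?_⟩
      have hwt : t.2 ∈ M.ball n := ⟨j - 1, by omega, GSteps_world ht⟩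
      have hwu : u.2 ∈ M.ball n := by
        have h1 : GSteps M (MuForm.and φ φ) (j + 1) u := Or.inr ⟨t, ht, hm⟩
        exact ⟨j, by omega, GSteps_world h1⟩
      exact evalMove_transport hI _ hwt hwu hm

/-- Characterization of the worlds of `fGame` reachable in at most `k`
steps from its distinguished point. -/
lemma ball_char_fwd {M : PModel} (φ : MuForm (Fin 2)) :
    ∀ {k : ℕ} {x : EncW (MuForm (Fin 2) × M.World)},
      stepsLe (fGame (MuForm.and φ φ) M) k (fGame (MuForm.and φ φ) M).pt x →
      (∃ u j, x = EncW.pos u ∧ 2 * j ≤ k ∧ GSteps M (MuForm.and φ φ) j u) ∨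
      (∃ u u' j, x = EncW.mid u u' ∧ 2 * j + 1 ≤ k ∧
        GSteps M (MuForm.and φ φ) j u ∧ evalMove M.toK (MuForm.and φ φ) u u') := by
  intro k
  induction k with
  | zero =>
    intro x hx
    have hx' : (fGame (MuForm.and φ φ) M).pt = x := hx
    exact Or.inl ⟨(MuForm.and φ φ, M.pt), 0, hx'.symm, by omega, rfl⟩
  | succ k ih =>
    rintro x (hx | ⟨z, hz, he⟩)
    · rcases ih hx with ⟨u, j, h1, h2, h3⟩ | ⟨u, u', j, h1, h2, h3, h4⟩
      · exact Or.inl ⟨u, j, h1, by omega, h3⟩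
      · exact Or.inr ⟨u, u', j, h1, by omega, h3, h4⟩
    · rcases he with he | he
      · -- R0 step : z = pos v, x = mid u u'
        cases z with
        | mid a b => exact (he : False).elim
        | pos v =>
          cases x with
          | pos w => exact (he : False).elim
          | mid u u' =>
            obtain ⟨hvu, hE⟩ : v = u ∧ evalMove M.toK (MuForm.and φ φ) u u' := he
            subst hvu
            rcases ih hz with ⟨u0, j, h1, h2, h3⟩ | ⟨u0, u0', j, h1, h2, h3, h4⟩
            · injection h1 with hh
              cases hh
              exact Or.inr ⟨v, u', j, rfl, by omega, h3, hE⟩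
            · exact absurd h1 (by simp)
      · -- R1 step : z = mid u u', x = pos w
        cases z with
        | pos v => exact (he : False).elim
        | mid u u' =>
          cases x with
          | mid a b => exact (he : False).elim
          | pos w =>
            obtain ⟨hwu, hE⟩ : w = u' ∧ evalMove M.toK (MuForm.and φ φ) u u' := he
            subst hwu
            rcases ih hz with ⟨u0, j, h1, h2, h3⟩ | ⟨u0, u0', j, h1, h2, h3, h4⟩
            · exact absurd h1 (by simp)
            · injection h1 with hh hh'
              cases hh
              cases hh'
              exact Or.inl ⟨w, j + 1, rfl, by omega, Or.inr ⟨u, h3, h4⟩⟩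

lemma GSteps_to_stepsLe {M : PModel} (φ : MuForm (Fin 2)) :
    ∀ {j} {u : MuForm (Fin 2) × M.World}, GSteps M (MuForm.and φ φ) j u →
      stepsLe (fGame (MuForm.and φ φ) M) (2 * j)
        (fGame (MuForm.and φ φ) M).pt (EncW.pos u) := by
  intro j
  induction j with
  | zero =>
    intro u hu
    have h0 : u = (MuForm.and φ φ, M.pt) := hu
    subst h0; rfl
  | succ j ih =>
    rintro u (h | ⟨t, ht, hm⟩)
    · exact stepsLe_mono _ (by omega) (ih h)
    · have h2 : stepsLe (fGame (MuForm.and φ φ) M) (2 * j + 1)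
          (fGame (MuForm.and φ φ) M).pt (EncW.mid t u) :=
        stepsLe_snoc _ (ih ht) (Or.inl ⟨rfl, hm⟩)
      exact stepsLe_mono _ (by omega) (stepsLe_snoc _ h2 (Or.inr ⟨rfl, hm⟩))

lemma GSteps_to_stepsLe_mid {M : PModel} (φ : MuForm (Fin 2))
    {j : ℕ} {u u' : MuForm (Fin 2) × M.World}
    (hg : GSteps M (MuForm.and φ φ) j u)
    (hm : evalMove M.toK (MuForm.and φ φ) u u') :
    stepsLe (fGame (MuForm.and φ φ) M) (2 * j + 1)
      (fGame (MuForm.and φ φ) M).pt (EncW.mid u u') :=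
  stepsLe_snoc _ (GSteps_to_stepsLe φ hg) (Or.inl ⟨rfl, hm⟩)

/-- Extension of the `n`-isomorphism to worlds of the encoded game. -/
noncomputable def teMap {M M' : PModel} (n : ℕ)
    (I : {x // x ∈ M.ball n} ≃ {x // x ∈ M'.ball n}) :
    EncW (MuForm (Fin 2) × M.World) → EncW (MuForm (Fin 2) × M'.World)
  | EncW.pos u => EncW.pos (tpMap n I u)
  | EncW.mid u u' => EncW.mid (tpMap n I u) (tpMap n I u')

lemma teMap_mem {M M' : PModel} {n : ℕ}
    {I : {x // x ∈ M.ball n} ≃ {x // x ∈ M'.ball n}}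
    (hI : IsNIso M M' n I) (hn : 1 ≤ n) (φ : MuForm (Fin 2))
    {x : EncW (MuForm (Fin 2) × M.World)}
    (hx : x ∈ (fGame (MuForm.and φ φ) M).ball (n + 1)) :
    teMap n I x ∈ (fGame (MuForm.and φ φ) M').ball (n + 1) := by
  obtain ⟨k, hk, hs⟩ := hx
  rcases ball_char_fwd φ hs with ⟨u, j, rfl, h2, h3⟩ | ⟨u, u', j, rfl, h2, h3, h4⟩
  · have hg' := GSteps_transport hI hn φ j (by omega) u h3
    exact ⟨2 * j, by omega, GSteps_to_stepsLe φ hg'⟩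
  · have hg' := GSteps_transport hI hn φ j (by omega) u h3
    have hwu : u.2 ∈ M.ball n := ⟨j - 1, by omega, GSteps_world h3⟩
    have hwu' : u'.2 ∈ M.ball n := by
      have h5 : GSteps M (MuForm.and φ φ) (j + 1) u' := Or.inr ⟨u, h3, h4⟩
      exact ⟨j, by omega, GSteps_world h5⟩
    have hm' := evalMove_transport hI _ hwu hwu' h4
    exact ⟨2 * j + 1, by omega, GSteps_to_stepsLe_mid φ hg' hm'⟩

lemma ball_pos_world {M : PModel} {n : ℕ} (hn : 1 ≤ n) (φ : MuForm (Fin 2))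
    {u : MuForm (Fin 2) × M.World}
    (hx : EncW.pos u ∈ (fGame (MuForm.and φ φ) M).ball (n + 1)) :
    u.2 ∈ M.ball n := by
  obtain ⟨k, hk, hs⟩ := hx
  rcases ball_char_fwd φ hs with ⟨u0, j, h1, h2, h3⟩ | ⟨u0, u0', j, h1, h2, h3, h4⟩
  · injection h1 with hh
    cases hh
    exact ⟨j - 1, by omega, GSteps_world h3⟩
  · exact absurd h1 (by simp)

lemma ball_mid_world {M : PModel} {n : ℕ} (hn : 1 ≤ n) (φ : MuForm (Fin 2))
    {u u' : MuForm (Fin 2) × M.World}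
    (hx : EncW.mid u u' ∈ (fGame (MuForm.and φ φ) M).ball (n + 1)) :
    u.2 ∈ M.ball n ∧ u'.2 ∈ M.ball n := by
  obtain ⟨k, hk, hs⟩ := hx
  rcases ball_char_fwd φ hs with ⟨u0, j, h1, h2, h3⟩ | ⟨u0, u0', j, h1, h2, h3, h4⟩
  · exact absurd h1 (by simp)
  · injection h1 with hh hh'
    cases hh
    cases hh'
    refine ⟨⟨j - 1, by omega, GSteps_world h3⟩, ?_⟩
    have h5 : GSteps M (MuForm.and φ φ) (j + 1) u' := Or.inr ⟨u, h3, h4⟩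
    exact ⟨j, by omega, GSteps_world h5⟩

lemma teMap_symm {M M' : PModel} {n : ℕ}
    {I : {x // x ∈ M.ball n} ≃ {x // x ∈ M'.ball n}}
    (hn : 1 ≤ n) (φ : MuForm (Fin 2)) {x : EncW (MuForm (Fin 2) × M.World)}
    (hx : x ∈ (fGame (MuForm.and φ φ) M).ball (n + 1)) :
    teMap n I.symm (teMap n I x) = x := by
  cases x with
  | pos u =>
    have hu := ball_pos_world hn φ hx
    show EncW.pos (tpMap n I.symm (tpMap n I u)) = EncW.pos u
    rw [tpMap_symm hu]
  | mid u u' =>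
    obtain ⟨hu, hu'⟩ := ball_mid_world hn φ hx
    show EncW.mid _ _ = EncW.mid u u'
    rw [tpMap_symm hu, tpMap_symm hu']

lemma encR0_iff {M M' : PModel} {n : ℕ}
    {I : {x // x ∈ M.ball n} ≃ {x // x ∈ M'.ball n}}
    (hI : IsNIso M M' n I) (hn : 1 ≤ n) (φ : MuForm (Fin 2))
    {x y : EncW (MuForm (Fin 2) × M.World)}
    (hx : x ∈ (fGame (MuForm.and φ φ) M).ball (n + 1))
    (hy : y ∈ (fGame (MuForm.and φ φ) M).ball (n + 1)) :
    (fGame (MuForm.and φ φ) M).R0 x y ↔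
    (fGame (MuForm.and φ φ) M').R0 (teMap n I x) (teMap n I y) := by
  cases x with
  | mid a b => cases y <;> exact Iff.rfl
  | pos v =>
    cases y with
    | pos w => exact Iff.rfl
    | mid u u' =>
      have hv := ball_pos_world hn φ hx
      obtain ⟨hu, hu'⟩ := ball_mid_world hn φ hy
      show (v = u ∧ evalMove M.toK (MuForm.and φ φ) u u') ↔
        (tpMap n I v = tpMap n I u ∧
          evalMove M'.toK (MuForm.and φ φ) (tpMap n I u) (tpMap n I u'))
      exact and_congr (tpMap_inj hv hu).symm (evalMove_iff hI _ hu hu')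

lemma encR1_iff {M M' : PModel} {n : ℕ}
    {I : {x // x ∈ M.ball n} ≃ {x // x ∈ M'.ball n}}
    (hI : IsNIso M M' n I) (hn : 1 ≤ n) (φ : MuForm (Fin 2))
    {x y : EncW (MuForm (Fin 2) × M.World)}
    (hx : x ∈ (fGame (MuForm.and φ φ) M).ball (n + 1))
    (hy : y ∈ (fGame (MuForm.and φ φ) M).ball (n + 1)) :
    (fGame (MuForm.and φ φ) M).R1 x y ↔
    (fGame (MuForm.and φ φ) M').R1 (teMap n I x) (teMap n I y) := by
  cases x with
  | pos v => cases y <;> exact Iff.rfl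
  | mid u u' =>
    cases y with
    | mid a b => exact Iff.rfl
    | pos w =>
      obtain ⟨hu, hu'⟩ := ball_mid_world hn φ hx
      have hw := ball_pos_world hn φ hy
      show (w = u' ∧ evalMove M.toK (MuForm.and φ φ) u u') ↔
        (tpMap n I w = tpMap n I u' ∧
          evalMove M'.toK (MuForm.and φ φ) (tpMap n I u) (tpMap n I u'))
      exact and_congr (tpMap_inj hw hu').symm (evalMove_iff hI _ hu hu')

lemma encV_iff {M M' : PModel} {n : ℕ}
    {I : {x // x ∈ M.ball n} ≃ {x // x ∈ M'.ball n}}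
    (hI : IsNIso M M' n I) (hn : 1 ≤ n) (φ : MuForm (Fin 2)) (p : ℕ)
    {x : EncW (MuForm (Fin 2) × M.World)}
    (hx : x ∈ (fGame (MuForm.and φ φ) M).ball (n + 1)) :
    x ∈ (fGame (MuForm.and φ φ) M).V p ↔
      teMap n I x ∈ (fGame (MuForm.and φ φ) M').V p := by
  cases x with
  | pos u =>
    have hu := ball_pos_world hn φ hx
    obtain _|_|_|_|_|_|_|_|p := p
    · exact iff_of_true trivial trivial
    · exact iff_of_true ⟨u, rfl⟩ ⟨tpMap n I u, rfl⟩
    · exact iff_of_true ⟨u, rfl⟩ ⟨tpMap n I u, rfl⟩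
    · show (∃ a b, EncW.pos u = EncW.mid a b) ↔
        (∃ a b, EncW.pos (tpMap n I u) = EncW.mid a b)
      simp
    · show (∃ a b, EncW.pos u = EncW.mid a b) ↔
        (∃ a b, EncW.pos (tpMap n I u) = EncW.mid a b)
      simp
    · exact iff_of_true ⟨u, rfl⟩ ⟨tpMap n I u, rfl⟩
    · -- p = 6
      show (∃ v, EncW.pos u = EncW.pos v ∧ evalOwnV M.toK (MuForm.and φ φ) v) ↔
        (∃ v, EncW.pos (tpMap n I u) = EncW.pos v ∧
          evalOwnV M'.toK (MuForm.and φ φ) v)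
      constructor
      · rintro ⟨v, hv, hown⟩
        injection hv with hh
        cases hh
        exact ⟨tpMap n I u, rfl, (evalOwnV_iff hI _ hu).mp hown⟩
      · rintro ⟨v, hv, hown⟩
        injection hv with hh
        cases hh
        exact ⟨u, rfl, (evalOwnV_iff hI _ hu).mpr hown⟩
    · -- p = 7
      show (∃ v, EncW.pos u = EncW.pos v ∧ ¬ evalOwnV M.toK (MuForm.and φ φ) v) ↔
        (∃ v, EncW.pos (tpMap n I u) = EncW.pos v ∧
          ¬ evalOwnV M'.toK (MuForm.and φ φ) v)
      constructor
      · rintro ⟨v, hv, hown⟩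
        injection hv with hh
        cases hh
        exact ⟨tpMap n I u, rfl, fun hc => hown ((evalOwnV_iff hI _ hu).mpr hc)⟩
      · rintro ⟨v, hv, hown⟩
        injection hv with hh
        cases hh
        exact ⟨u, rfl, fun hc => hown ((evalOwnV_iff hI _ hu).mp hc)⟩
    · -- p ≥ 8
      show (∃ v, EncW.pos u = EncW.pos v ∧ fpParity v.1 = p + 8 - 8) ↔
        (∃ v, EncW.pos (tpMap n I u) = EncW.pos v ∧ fpParity v.1 = p + 8 - 8)
      constructor
      · rintro ⟨v, hv, hpar⟩
        injection hv with hh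
        cases hh
        exact ⟨tpMap n I u, rfl, hpar⟩
      · rintro ⟨v, hv, hpar⟩
        injection hv with hh
        cases hh
        exact ⟨u, rfl, hpar⟩
  | mid u u' =>
    obtain _|_|_|_|_|_|_|_|p := p
    · exact iff_of_true trivial trivial
    · show (∃ v, EncW.mid u u' = EncW.pos v) ↔
        (∃ v, EncW.mid (tpMap n I u) (tpMap n I u') = EncW.pos v)
      simp
    · show (∃ v, EncW.mid u u' = EncW.pos v) ↔
        (∃ v, EncW.mid (tpMap n I u) (tpMap n I u') = EncW.pos v)
      simp
    · exact iff_of_true ⟨u, u', rfl⟩ ⟨tpMap n I u, tpMap n I u', rfl⟩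
    · exact iff_of_true ⟨u, u', rfl⟩ ⟨tpMap n I u, tpMap n I u', rfl⟩
    · show (∃ v, EncW.mid u u' = EncW.pos v) ↔
        (∃ v, EncW.mid (tpMap n I u) (tpMap n I u') = EncW.pos v)
      simp
    · show (∃ v, EncW.mid u u' = EncW.pos v ∧ evalOwnV M.toK (MuForm.and φ φ) v) ↔
        (∃ v, EncW.mid (tpMap n I u) (tpMap n I u') = EncW.pos v ∧
          evalOwnV M'.toK (MuForm.and φ φ) v)
      simp
    · show (∃ v, EncW.mid u u' = EncW.pos v ∧
          ¬ evalOwnV M.toK (MuForm.and φ φ) v) ↔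
        (∃ v, EncW.mid (tpMap n I u) (tpMap n I u') = EncW.pos v ∧
          ¬ evalOwnV M'.toK (MuForm.and φ φ) v)
      simp
    · show (∃ v, EncW.mid u u' = EncW.pos v ∧ fpParity v.1 = p + 8 - 8) ↔
        (∃ v, EncW.mid (tpMap n I u) (tpMap n I u') = EncW.pos v ∧
          fpParity v.1 = p + 8 - 8)
      simp

/-- The `fGame`s of any two pointed models are `1`-isomorphic. -/
lemma fGame_one_iso (φ : MuForm (Fin 2)) (M M' : PModel) :
    NIsomorphic (fGame (MuForm.and φ φ) M) (fGame (MuForm.and φ φ) M') 1 := by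
  have ball_one : ∀ (N : PModel) (x : N.World), x ∈ N.ball 1 → x = N.pt := by
    rintro N x ⟨k, hk, hs⟩
    obtain rfl : k = 0 := by omega
    exact hs.symm
  have hm : (fGame (MuForm.and φ φ) M).pt ∈ (fGame (MuForm.and φ φ) M).ball 1 :=
    ⟨0, le_refl 1, rfl⟩
  have hm' : (fGame (MuForm.and φ φ) M').pt ∈ (fGame (MuForm.and φ φ) M').ball 1 :=
    ⟨0, le_refl 1, rfl⟩
  refine ⟨⟨fun _ => ⟨_, hm'⟩, fun _ => ⟨_, hm⟩, ?_, ?_⟩, ?_, ?_, ?_, ?_⟩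
  · intro x; exact Subtype.ext (ball_one _ _ x.2).symm
  · intro y; exact Subtype.ext (ball_one _ _ y.2).symm
  · intro hx; rfl
  · intro x y
    rw [ball_one _ _ x.2, ball_one _ _ y.2]
    exact ⟨fun h => False.elim h, fun h => False.elim h⟩
  · intro x y
    rw [ball_one _ _ x.2, ball_one _ _ y.2]
    exact ⟨fun h => False.elim h, fun h => False.elim h⟩
  · intro p x
    rw [ball_one _ _ x.2]
    obtain _|_|_|_|_|_|_|_|p := p
    · exact iff_of_true trivial trivial
    · exact iff_of_true ⟨(MuForm.and φ φ, M.pt), rfl⟩ ⟨(MuForm.and φ φ, M'.pt), rfl⟩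
    · exact iff_of_true ⟨(MuForm.and φ φ, M.pt), rfl⟩ ⟨(MuForm.and φ φ, M'.pt), rfl⟩
    · show (∃ a b, EncW.pos (MuForm.and φ φ, M.pt) = EncW.mid a b) ↔
        (∃ a b, EncW.pos (MuForm.and φ φ, M'.pt) = EncW.mid a b)
      simp
    · show (∃ a b, EncW.pos (MuForm.and φ φ, M.pt) = EncW.mid a b) ↔
        (∃ a b, EncW.pos (MuForm.and φ φ, M'.pt) = EncW.mid a b)
      simp
    · exact iff_of_true ⟨(MuForm.and φ φ, M.pt), rfl⟩ ⟨(MuForm.and φ φ, M'.pt), rfl⟩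
    · -- p = 6 : ownership of an `and` position is `False`
      show (∃ v, EncW.pos (MuForm.and φ φ, M.pt) = EncW.pos v ∧
          evalOwnV M.toK (MuForm.and φ φ) v) ↔
        (∃ v, EncW.pos (MuForm.and φ φ, M'.pt) = EncW.pos v ∧
          evalOwnV M'.toK (MuForm.and φ φ) v)
      constructor
      · rintro ⟨v, hv, hown⟩
        injection hv with hh
        cases hh
        exact hown.elim
      · rintro ⟨v, hv, hown⟩
        injection hv with hh
        cases hh
        exact hown.elim
    · -- p = 7 : non-ownership of an `and` position is `True`
      exact iff_of_true ⟨(MuForm.and φ φ, M.pt), rfl, fun h => h⟩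
        ⟨(MuForm.and φ φ, M'.pt), rfl, fun h => h⟩
    · -- p ≥ 8 : the parity condition is the same on both sides
      show (∃ v, EncW.pos (MuForm.and φ φ, M.pt) = EncW.pos v ∧
          fpParity v.1 = p + 8 - 8) ↔
        (∃ v, EncW.pos (MuForm.and φ φ, M'.pt) = EncW.pos v ∧
          fpParity v.1 = p + 8 - 8)
      constructor
      · rintro ⟨v, hv, hpar⟩
        injection hv with hh
        cases hh
        exact ⟨(MuForm.and φ φ, M'.pt), rfl, hpar⟩
      · rintro ⟨v, hv, hpar⟩
        injection hv with hh
        cases hh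
        exact ⟨(MuForm.and φ φ, M.pt), rfl, hpar⟩

/-- Step lemma: `n`-isomorphic models have `(n+1)`-isomorphic `fGame`s. -/
lemma fGame_step_iso (φ : MuForm (Fin 2)) {M M' : PModel} {n : ℕ}
    (h : NIsomorphic M M' n) :
    NIsomorphic (fGame (MuForm.and φ φ) M) (fGame (MuForm.and φ φ) M') (n + 1) := by
  rcases Nat.eq_zero_or_pos n with rfl | hn
  · exact fGame_one_iso φ M M'
  · obtain ⟨I, hI⟩ := h
    refine ⟨⟨fun x => ⟨teMap n I x.val, teMap_mem hI hn φ x.2⟩,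
             fun y => ⟨teMap n I.symm y.val, teMap_mem hI.symm hn φ y.2⟩, ?_, ?_⟩,
             ?_, ?_, ?_, ?_⟩
    · intro x
      exact Subtype.ext (teMap_symm hn φ x.2)
    · intro y
      apply Subtype.ext
      have h2 := teMap_symm (I := I.symm) hn φ y.2
      rwa [Equiv.symm_symm] at h2
    · intro hpt
      show teMap n I (fGame (MuForm.and φ φ) M).pt = (fGame (MuForm.and φ φ) M').pt
      show EncW.pos (tpMap n I (MuForm.and φ φ, M.pt)) = EncW.pos (MuForm.and φ φ, M'.pt)
      simp only [tpMap]
      rw [twMap_pt hI hn]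
    · intro x y; exact encR0_iff hI hn φ x.2 y.2
    · intro x y; exact encR1_iff hI hn φ x.2 y.2
    · intro p x; exact encV_iff hI hn φ p x.2

/-- Any two pointed models are `0`-isomorphic. -/
lemma nIso_zero (M M' : PModel) : NIsomorphic M M' 0 := by
  have hM : ∀ x : M.World, x ∉ M.ball 0 := by rintro x ⟨k, hk, -⟩; omega
  have hM' : ∀ x : M'.World, x ∉ M'.ball 0 := by rintro x ⟨k, hk, -⟩; omega
  exact ⟨⟨fun x => absurd x.2 (hM x.val), fun y => absurd y.2 (hM' y.val),
    fun x => absurd x.2 (hM x.val), fun y => absurd y.2 (hM' y.val)⟩,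
    fun hx => absurd hx (hM M.pt), fun x y => absurd x.2 (hM x.val),
    fun x y => absurd x.2 (hM x.val), fun p x => absurd x.2 (hM x.val)⟩

end AuxNIso

/-- For the sequence `(M_{k+1}, w_{k+1}) = f_{φ∧φ}(M_k, w_k)`
starting from an arbitrary pointed model, `(M_n, w_n)` and `(M_m, w_m)` are
`n`-isomorphic for all `m > n`. -/
theorem iterates_are_n_isomorphic (φ : MuForm (Fin 2)) (M0 : PModel)
    (hM0 : M0.Acyclic) (m n : ℕ) (h : n < m) :
    NIsomorphic ((fGame (MuForm.and φ φ))^[n] M0)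
      ((fGame (MuForm.and φ φ))^[m] M0) n := by
  clear hM0
  revert h
  induction n generalizing m with
  | zero => intro h; exact nIso_zero _ _
  | succ n ih =>
    intro h
    obtain ⟨m', rfl⟩ : ∃ m', m = m' + 1 := ⟨m - 1, by omega⟩
    have hstep := fGame_step_iso φ (ih m' (by omega))
    rw [Function.iterate_succ_apply', Function.iterate_succ_apply']
    exact hstep
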